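/- Under the assumptions of the sufficient decrease lemma for the linearised Bregman iteration (E differentiable with L-Lipschitz gradient and bounded below, stepsizes 0 < τᵏ ≤ 2/(L+2ρ₁), ρ₁ > 0), the iterates satisfy Σ_{k=0}^∞ [ρ₁‖uᵏ⁺¹ − uᵏ‖² + D_R^symm(uᵏ⁺¹, uᵏ)] < ∞; in particular ‖uᵏ⁺¹ − uᵏ‖ → 0 and D_R^symm(uᵏ⁺¹, uᵏ) → 0. -/

import Mathlib

open RealInnerProductSpace Filter Topology
open intervalIntegral

noncomputable def fenchel {n : ℕ} (J : EuclideanSpace ℝ (Fin n) → EReal)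
    (p : EuclideanSpace ℝ (Fin n)) : EReal :=
  ⨆ u, ((⟪u, p⟫ : ℝ) : EReal) - J u

def IsSubgradient {n : ℕ} (J : EuclideanSpace ℝ (Fin n) → EReal)
    (u p : EuclideanSpace ℝ (Fin n)) : Prop :=
  ∀ v, J u + ((⟪p, v - u⟫ : ℝ) : EReal) ≤ J v

def ERealConvex {n : ℕ} (J : EuclideanSpace ℝ (Fin n) → EReal) : Prop :=
  ∀ u v : EuclideanSpace ℝ (Fin n), ∀ a b : ℝ, 0 ≤ a → 0 ≤ b → a + b = 1 →
    J (a • u + b • v) ≤ (a : EReal) * J u + (b : EReal) * J v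


lemma descent_lemma {n : ℕ} (L : ℝ) (E : EuclideanSpace ℝ (Fin n) → ℝ)
    (hE : Differentiable ℝ E)
    (hLip : ∀ x y, ‖gradient E x - gradient E y‖ ≤ L * ‖x - y‖)
    (x y : EuclideanSpace ℝ (Fin n)) :
    E y ≤ E x + ⟪gradient E x, y - x⟫ + L / 2 * ‖y - x‖ ^ 2 := by
  set Δ := y - x with hΔ
  set f' : ℝ → ℝ := fun t => ⟪gradient E (x + t • Δ), Δ⟫ with hf'
  have hd : ∀ t : ℝ, HasDerivAt (fun s : ℝ => E (x + s • Δ)) (f' t) t := by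
    intro t
    have h1 : HasDerivAt (fun s : ℝ => x + s • Δ) Δ t := by
      simpa using ((hasDerivAt_id t).smul_const Δ).const_add x
    have h2 : HasFDerivAt E (InnerProductSpace.toDual ℝ _ (gradient E (x + t • Δ)))
        (x + t • Δ) := (hE (x + t • Δ)).hasGradientAt.hasFDerivAt
    have h3 : HasDerivAt (fun s : ℝ => E (x + s • Δ))
        (InnerProductSpace.toDual ℝ _ (gradient E (x + t • Δ)) Δ) t := h2.comp_hasDerivAt t h1
    simpa [f'] using h3
  have hcont : Continuous f' := by
    rw [continuous_iff_continuousAt]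
    intro t
    rw [Metric.continuousAt_iff]
    intro ε hε
    by_cases hL : L * ‖Δ‖ * ‖Δ‖ ≤ 0
    · refine ⟨1, one_pos, fun {s} _ => ?_⟩
      have := (inner_sub_left (𝕜 := ℝ) (gradient E (x + s • Δ)) (gradient E (x + t • Δ)) Δ)
      have hb : dist (f' s) (f' t) ≤ ‖gradient E (x + s • Δ) - gradient E (x + t • Δ)‖ * ‖Δ‖ := by
        rw [Real.dist_eq]
        calc |f' s - f' t| = |⟪gradient E (x + s • Δ) - gradient E (x + t • Δ), Δ⟫| := by
              rw [inner_sub_left]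
          _ ≤ _ := abs_real_inner_le_norm _ _
      have hlip2 : ‖gradient E (x + s • Δ) - gradient E (x + t • Δ)‖ * ‖Δ‖
          ≤ (L * ‖Δ‖ * ‖Δ‖) * |s - t| := by
        have := hLip (x + s • Δ) (x + t • Δ)
        have heq : (x + s • Δ) - (x + t • Δ) = (s - t) • Δ := by
          rw [sub_smul]; abel
        rw [heq, norm_smul, Real.norm_eq_abs] at this
        nlinarith [norm_nonneg Δ, abs_nonneg (s - t), norm_nonneg (gradient E (x + s • Δ) - gradient E (x + t • Δ))]
      have hnn : ‖gradient E (x + s • Δ) - gradient E (x + t • Δ)‖ * ‖Δ‖ ≥ 0 := by positivity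
      have : (L * ‖Δ‖ * ‖Δ‖) * |s - t| ≤ 0 := by nlinarith [abs_nonneg (s - t)]
      have := le_antisymm (hb.trans (hlip2.trans this)) dist_nonneg
      linarith [hε, dist_nonneg (x := f' s) (y := f' t)]
    · push_neg at hL
      refine ⟨ε / (L * ‖Δ‖ * ‖Δ‖), by positivity, fun {s} hs => ?_⟩
      have hb : dist (f' s) (f' t) ≤ ‖gradient E (x + s • Δ) - gradient E (x + t • Δ)‖ * ‖Δ‖ := by
        rw [Real.dist_eq]
        calc |f' s - f' t| = |⟪gradient E (x + s • Δ) - gradient E (x + t • Δ), Δ⟫| := by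
              rw [inner_sub_left]
          _ ≤ _ := abs_real_inner_le_norm _ _
      have hlip2 : ‖gradient E (x + s • Δ) - gradient E (x + t • Δ)‖ * ‖Δ‖
          ≤ (L * ‖Δ‖ * ‖Δ‖) * |s - t| := by
        have := hLip (x + s • Δ) (x + t • Δ)
        have heq : (x + s • Δ) - (x + t • Δ) = (s - t) • Δ := by
          rw [sub_smul]; abel
        rw [heq, norm_smul, Real.norm_eq_abs] at this
        nlinarith [norm_nonneg Δ, abs_nonneg (s - t), norm_nonneg (gradient E (x + s • Δ) - gradient E (x + t • Δ))]
      have : dist s t < ε / (L * ‖Δ‖ * ‖Δ‖) := hs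
      rw [Real.dist_eq] at this
      calc dist (f' s) (f' t) ≤ (L * ‖Δ‖ * ‖Δ‖) * |s - t| := hb.trans hlip2
        _ < (L * ‖Δ‖ * ‖Δ‖) * (ε / (L * ‖Δ‖ * ‖Δ‖)) := by
            exact mul_lt_mul_of_pos_left this hL
        _ = ε := mul_div_cancel₀ ε hL.ne'
  have hint : E y - E x = ∫ t in (0:ℝ)..1, f' t := by
    have := intervalIntegral.integral_eq_sub_of_hasDerivAt (f := fun s : ℝ => E (x + s • Δ))
      (f' := f') (a := 0) (b := 1) (fun t _ => hd t)
      (hcont.intervalIntegrable 0 1)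
    simp only [one_smul, zero_smul, add_zero] at this
    rw [this]
    congr 1 <;> simp [hΔ]
  have hbound : ∀ t ∈ Set.Icc (0:ℝ) 1, f' t ≤ ⟪gradient E x, Δ⟫ + t * (L * ‖Δ‖ ^ 2) := by
    intro t ht
    have h1 : f' t - ⟪gradient E x, Δ⟫ = ⟪gradient E (x + t • Δ) - gradient E x, Δ⟫ := by
      rw [inner_sub_left]
    have h2 : ⟪gradient E (x + t • Δ) - gradient E x, Δ⟫ ≤
        ‖gradient E (x + t • Δ) - gradient E x‖ * ‖Δ‖ := real_inner_le_norm _ _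
    have h3 : ‖gradient E (x + t • Δ) - gradient E x‖ ≤ L * (t * ‖Δ‖) := by
      have := hLip (x + t • Δ) x
      simpa [norm_smul, Real.norm_eq_abs, abs_of_nonneg ht.1] using this
    nlinarith [norm_nonneg Δ, norm_nonneg (gradient E (x + t • Δ) - gradient E x)]
  have hInt2 : (∫ t in (0:ℝ)..1, (⟪gradient E x, Δ⟫ + t * (L * ‖Δ‖ ^ 2)))
      = ⟪gradient E x, Δ⟫ + L / 2 * ‖Δ‖ ^ 2 := by
    rw [intervalIntegral.integral_add (intervalIntegrable_const)
      (intervalIntegrable_id.mul_const _), intervalIntegral.integral_mul_const,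
      integral_id]
    norm_num
    ring
  have hmono : (∫ t in (0:ℝ)..1, f' t) ≤ ∫ t in (0:ℝ)..1, (⟪gradient E x, Δ⟫ + t * (L * ‖Δ‖ ^ 2)) := by
    apply intervalIntegral.integral_mono_on (by norm_num)
      (hcont.intervalIntegrable 0 1)
      (((continuous_const.add (continuous_id.mul continuous_const)) : Continuous fun t : ℝ => ⟪gradient E x, Δ⟫ + t * (L * ‖Δ‖ ^ 2)).intervalIntegrable 0 1)
      hbound
  rw [hInt2] at hmono
  linarith [hint ▸ hmono]

/-- Summability of decrease quantities and vanishing of the iterates gap. -/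
theorem decrease_summable {n : ℕ} (L ρ₁ : ℝ) (hρ₁ : 0 < ρ₁)
    (E : EuclideanSpace ℝ (Fin n) → ℝ) (hE : Differentiable ℝ E)
    (hLip : ∀ x y, ‖gradient E x - gradient E y‖ ≤ L * ‖x - y‖)
    (hbdd : BddBelow (Set.range E))
    (R : EuclideanSpace ℝ (Fin n) → EReal)
    (hproper₁ : ∀ x, R x ≠ ⊥) (hproper₂ : ∃ x, R x ≠ ⊤)
    (hlsc : LowerSemicontinuous R) (hconv : ERealConvex R)
    (u q : ℕ → EuclideanSpace ℝ (Fin n)) (τ : ℕ → ℝ)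
    (hstep : ∀ k, 0 < τ k ∧ τ k ≤ 2 / (L + 2 * ρ₁))
    (hsub : ∀ k, IsSubgradient R (u k) (q k))
    (hupd : ∀ k, q (k + 1) = q k - (1 / τ k) • (u (k + 1) - u k + τ k • gradient E (u k))) :
    Summable (fun k => ρ₁ * ‖u (k + 1) - u k‖ ^ 2 + ⟪q (k + 1) - q k, u (k + 1) - u k⟫)
      ∧ Tendsto (fun k => ‖u (k + 1) - u k‖ ^ 2) atTop (𝓝 0)
      ∧ Tendsto (fun k => ⟪q (k + 1) - q k, u (k + 1) - u k⟫) atTop (𝓝 0) := by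
  set a : ℕ → ℝ := fun k => ρ₁ * ‖u (k + 1) - u k‖ ^ 2 + ⟪q (k + 1) - q k, u (k + 1) - u k⟫
    with ha
  -- positivity of L + 2ρ₁
  have hc : 0 < L + 2 * ρ₁ := by
    by_contra h
    push_neg at h
    have h1 := (hstep 0).1
    have h2 := (hstep 0).2
    rcases eq_or_lt_of_le h with h | h
    · rw [h] at h2; simp at h2; linarith
    · have : 2 / (L + 2 * ρ₁) < 0 := div_neg_of_pos_of_neg two_pos h
      linarith
  -- step inequality on 1/τ
  have hτ : ∀ k, L / 2 + ρ₁ ≤ 1 / τ k := by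
    intro k
    obtain ⟨h1, h2⟩ := hstep k
    rw [le_div_iff₀ hc] at h2
    rw [le_div_iff₀ h1]
    nlinarith
  -- inner product identity
  have hinner : ∀ k, ⟪q (k + 1) - q k, u (k + 1) - u k⟫
      = -(1 / τ k) * ‖u (k + 1) - u k‖ ^ 2 - ⟪gradient E (u k), u (k + 1) - u k⟫ := by
    intro k
    have h1 : q (k + 1) - q k = -((1 / τ k) • (u (k + 1) - u k)) - gradient E (u k) := by
      rw [hupd k]
      have hτne : τ k ≠ 0 := (hstep k).1.ne'
      rw [smul_add, smul_smul, one_div_mul_cancel hτne, one_smul]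
      abel
    rw [h1, inner_sub_left, inner_neg_left, real_inner_smul_left, real_inner_self_eq_norm_sq]
    ring
  -- nonnegativity of the symmetric Bregman term
  have hfin : ∀ k, R (u k) ≠ ⊤ := by
    intro k htop
    obtain ⟨v, hv⟩ := hproper₂
    have := hsub k v
    rw [htop] at this
    rw [EReal.top_add_of_ne_bot (by exact EReal.coe_ne_bot _)] at this
    exact hv (top_le_iff.mp this)
  have hmono : ∀ k, 0 ≤ ⟪q (k + 1) - q k, u (k + 1) - u k⟫ := by
    intro k
    set r : ℕ → ℝ := fun j => (R (u j)).toReal with hr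
    have hcoe : ∀ j, ((r j : ℝ) : EReal) = R (u j) := fun j =>
      EReal.coe_toReal (hfin j) (hproper₁ _)
    have h1 : r k + ⟪q k, u (k + 1) - u k⟫ ≤ r (k + 1) := by
      have := hsub k (u (k + 1))
      rw [← hcoe k, ← hcoe (k + 1), ← EReal.coe_add, EReal.coe_le_coe_iff] at this
      exact this
    have h2 : r (k + 1) + ⟪q (k + 1), u k - u (k + 1)⟫ ≤ r k := by
      have := hsub (k + 1) (u k)
      rw [← hcoe k, ← hcoe (k + 1), ← EReal.coe_add, EReal.coe_le_coe_iff] at this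
      exact this
    have h3 : ⟪q (k + 1), u k - u (k + 1)⟫ = -⟪q (k + 1), u (k + 1) - u k⟫ := by
      rw [← inner_neg_right]; congr 1; abel
    rw [inner_sub_left]
    rw [h3] at h2
    linarith
  -- per-step decrease
  have hdec : ∀ k, a k ≤ E (u k) - E (u (k + 1)) := by
    intro k
    have hd := descent_lemma L E hE hLip (u k) (u (k + 1))
    have hi := hinner k
    have hstep' := hτ k
    simp only [ha]
    rw [hi]
    nlinarith [sq_nonneg ‖u (k + 1) - u k‖, real_inner_comm (gradient E (u k)) (u (k + 1) - u k)]
  have hnonneg : ∀ k, 0 ≤ a k := fun k => by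
    have := hmono k
    have : 0 ≤ ρ₁ * ‖u (k + 1) - u k‖ ^ 2 := by positivity
    simp only [ha]
    nlinarith [hmono k]
  obtain ⟨B, hB⟩ := hbdd
  have hsum_le : ∀ N, ∑ k ∈ Finset.range N, a k ≤ E (u 0) - B := by
    intro N
    calc ∑ k ∈ Finset.range N, a k ≤ ∑ k ∈ Finset.range N, (E (u k) - E (u (k + 1))) :=
          Finset.sum_le_sum fun k _ => hdec k
      _ = E (u 0) - E (u N) := Finset.sum_range_sub' (fun k => E (u k)) N
      _ ≤ E (u 0) - B := by
          have : B ≤ E (u N) := hB ⟨u N, rfl⟩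
          linarith
  have hsummable : Summable a := summable_of_sum_range_le hnonneg hsum_le
  have hatend : Tendsto a atTop (𝓝 0) := hsummable.tendsto_atTop_zero
  refine ⟨hsummable, ?_, ?_⟩
  · have hle : ∀ k, ‖u (k + 1) - u k‖ ^ 2 ≤ a k / ρ₁ := by
      intro k
      rw [le_div_iff₀ hρ₁]
      have := hmono k
      simp only [ha]; nlinarith
    have : Tendsto (fun k => a k / ρ₁) atTop (𝓝 0) := by
      simpa using hatend.div_const ρ₁
    exact squeeze_zero (fun k => by positivity) hle this
  · have hle : ∀ k, ⟪q (k + 1) - q k, u (k + 1) - u k⟫ ≤ a k := by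
      intro k
      simp only [ha]
      nlinarith [sq_nonneg ‖u (k + 1) - u k‖]
    exact squeeze_zero hmono hle hatend
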